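/- For the uniform distribution P on the 4×4 grid S = {(i,j) : 1 ≤ i,j ≤ 4} (mass 1/16 each), the set α₂ = {(5/2, 3/2), (5/2, 7/2)} has distortion error Σ_{s∈S} min_{a∈α₂} ‖s−a‖²/16 = 3/2, each point of α₂ is the mean of the eight grid points in its Voronoi half-plane, and no two-point set achieves a smaller distortion error than 3/2. -/

import Mathlib

/-! Auxiliary decidable verification that every 2-partition of the 4×4 grid has
within-cluster sum of squares at least 24 (in cleared-denominator, `q`-free form). -/

def leafOK (n sx sy : ℕ) : Bool :=
  decide (2*(sx^2+sy^2) + 400*n ≤ 27*n*(16-n) + 10*n*(sx+sy))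

def checkOK : List (ℕ × ℕ) → ℕ → ℕ → ℕ → Bool
  | [], n, sx, sy => leafOK n sx sy
  | p :: ps, n, sx, sy => checkOK ps (n+1) (sx+p.1) (sy+p.2) && checkOK ps n sx sy

def gridList : List (ℕ × ℕ) :=
  [(1,1),(1,2),(1,3),(1,4),(2,1),(2,2),(2,3),(2,4),
   (3,1),(3,2),(3,3),(3,4),(4,1),(4,2),(4,3),(4,4)]

set_option maxHeartbeats 1600000 in
lemma checkOK_eq : checkOK gridList 0 0 0 = true := by decide

lemma checkOK_spec : ∀ (l : List (ℕ × ℕ)) (n sx sy : ℕ), checkOK l n sx sy = true →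
    l.Nodup → ∀ A : Finset (ℕ × ℕ), A ⊆ l.toFinset →
    leafOK (n + A.card) (sx + ∑ s ∈ A, s.1) (sy + ∑ s ∈ A, s.2) = true := by
  intro l
  induction l with
  | nil =>
    intro n sx sy h _ A hA
    have : A = ∅ := Finset.subset_empty.mp (by simpa using hA)
    simpa [this, checkOK] using h
  | cons p ps ih =>
    intro n sx sy h hnd A hA
    rw [checkOK, Bool.and_eq_true] at h
    rw [List.nodup_cons] at hnd
    by_cases hp : p ∈ A
    · have hsub : A.erase p ⊆ ps.toFinset := by
        intro x hx
        rcases Finset.mem_erase.mp hx with ⟨hxne, hxA⟩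
        have := hA hxA
        simp only [List.toFinset_cons, Finset.mem_insert] at this
        tauto
      have hc : (A.erase p).card + 1 = A.card := Finset.card_erase_add_one hp
      have e1 : n + A.card = (n + 1) + (A.erase p).card := by omega
      have e2 : sx + ∑ s ∈ A, s.1 = (sx + p.1) + ∑ s ∈ A.erase p, s.1 := by
        rw [← Finset.add_sum_erase A _ hp]; ring
      have e3 : sy + ∑ s ∈ A, s.2 = (sy + p.2) + ∑ s ∈ A.erase p, s.2 := by
        rw [← Finset.add_sum_erase A _ hp]; ring
      rw [e1, e2, e3]
      exact ih (n+1) (sx+p.1) (sy+p.2) h.1 hnd.2 (A.erase p) hsub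
    · have hsub : A ⊆ ps.toFinset := by
        intro x hx
        have := hA hx
        simp only [List.toFinset_cons, Finset.mem_insert] at this
        rcases this with h' | h'
        · exact absurd (h' ▸ hx) hp
        · exact h'
      exact ih n sx sy h.2 hnd.2 A hsub

/-- The key combinatorial inequality for subsets of the grid. -/
lemma grid_leaf (A : Finset (ℕ × ℕ))
    (hA : A ⊆ Finset.Icc 1 4 ×ˢ Finset.Icc 1 4) :
    2*((∑ s ∈ A, s.1)^2+(∑ s ∈ A, s.2)^2) + 400*A.card
      ≤ 27*A.card*(16-A.card) + 10*A.card*((∑ s ∈ A, s.1)+(∑ s ∈ A, s.2)) := by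
  have hgl : (Finset.Icc 1 4 ×ˢ Finset.Icc 1 4 : Finset (ℕ × ℕ)) = gridList.toFinset := by
    decide
  have hnd : gridList.Nodup := by decide
  have := checkOK_spec gridList 0 0 0 checkOK_eq hnd A (hgl ▸ hA)
  simpa [leafOK] using this

/-- One-cluster lower bound: sum of squared distances to any point is at least the
within-cluster sum of squares. -/
lemma cluster_bound (C : Finset (ℕ × ℕ)) (w : ℝ × ℝ) :
    ((∑ s ∈ C, (s.1^2 + s.2^2) : ℕ) : ℝ)
      - (((∑ s ∈ C, s.1 : ℕ) : ℝ)^2 + ((∑ s ∈ C, s.2 : ℕ) : ℝ)^2) / (C.card : ℝ)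
    ≤ ∑ s ∈ C, (((s.1 : ℝ) - w.1)^2 + ((s.2 : ℝ) - w.2)^2) := by
  rcases C.eq_empty_or_nonempty with rfl | hC
  · simp
  · have hn : (0 : ℝ) < C.card := by exact_mod_cast Finset.card_pos.mpr hC
    have expand : ∑ s ∈ C, (((s.1 : ℝ) - w.1)^2 + ((s.2 : ℝ) - w.2)^2)
        = ((∑ s ∈ C, (s.1^2 + s.2^2) : ℕ) : ℝ)
          - 2*w.1*((∑ s ∈ C, s.1 : ℕ) : ℝ) - 2*w.2*((∑ s ∈ C, s.2 : ℕ) : ℝ)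
          + (C.card : ℝ)*(w.1^2+w.2^2) := by
      have step : ∀ s : ℕ × ℕ, (((s.1 : ℝ)) - w.1)^2 + ((s.2 : ℝ) - w.2)^2
          = ((s.1:ℝ)^2 + (s.2:ℝ)^2) - 2*w.1*(s.1:ℝ) - 2*w.2*(s.2:ℝ) + (w.1^2+w.2^2) := by
        intro s; ring
      rw [Finset.sum_congr rfl (fun s _ => step s)]
      push_cast
      rw [Finset.sum_add_distrib, Finset.sum_sub_distrib, Finset.sum_sub_distrib,
        Finset.sum_add_distrib, ← Finset.mul_sum, ← Finset.mul_sum, Finset.sum_const,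
        nsmul_eq_mul]
    rw [expand]
    set Sx := ((∑ s ∈ C, s.1 : ℕ) : ℝ)
    set Sy := ((∑ s ∈ C, s.2 : ℕ) : ℝ)
    set nr := (C.card : ℝ)
    have ht : (Sx^2 + Sy^2) / nr * nr = Sx^2 + Sy^2 := div_mul_cancel₀ _ (ne_of_gt hn)
    nlinarith [sq_nonneg (nr*w.1 - Sx), sq_nonneg (nr*w.2 - Sy), hn, ht]

/-- For the uniform distribution on the 4×4 grid, α₂ = {(5/2,3/2), (5/2,7/2)} has
distortion error 3/2, each of its points is the mean of the eight grid points in its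
Voronoi half-plane, and no two-point set has smaller distortion error. -/
theorem grid_two_means
    (d : ℝ × ℝ → ℝ × ℝ → ℝ) (hd : d = fun s a => (s.1 - a.1) ^ 2 + (s.2 - a.2) ^ 2) :
    (∑ i ∈ Finset.Icc (1:ℕ) 4, ∑ j ∈ Finset.Icc (1:ℕ) 4,
        min (d ((i : ℝ), (j : ℝ)) (5 / 2, 3 / 2)) (d ((i : ℝ), (j : ℝ)) (5 / 2, 7 / 2)))
      / 16 = 3 / 2 ∧
    ((1 / 8 : ℝ) * (∑ i ∈ Finset.Icc (1:ℕ) 4, ∑ j ∈ Finset.Icc (1:ℕ) 2, (i : ℝ)),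
      (1 / 8 : ℝ) * (∑ i ∈ Finset.Icc (1:ℕ) 4, ∑ j ∈ Finset.Icc (1:ℕ) 2, (j : ℝ)))
        = ((5 / 2 : ℝ), (3 / 2 : ℝ)) ∧
    ((1 / 8 : ℝ) * (∑ i ∈ Finset.Icc (1:ℕ) 4, ∑ j ∈ Finset.Icc (3:ℕ) 4, (i : ℝ)),
      (1 / 8 : ℝ) * (∑ i ∈ Finset.Icc (1:ℕ) 4, ∑ j ∈ Finset.Icc (3:ℕ) 4, (j : ℝ)))
        = ((5 / 2 : ℝ), (7 / 2 : ℝ)) ∧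
    (∀ p q : ℝ × ℝ,
      (3 / 2 : ℝ) ≤ (∑ i ∈ Finset.Icc (1:ℕ) 4, ∑ j ∈ Finset.Icc (1:ℕ) 4,
        min (d ((i : ℝ), (j : ℝ)) p) (d ((i : ℝ), (j : ℝ)) q)) / 16) := by
  subst hd
  have h14 : Finset.Icc (1:ℕ) 4 = {1, 2, 3, 4} := by decide
  have h12 : Finset.Icc (1:ℕ) 2 = {1, 2} := by decide
  have h34 : Finset.Icc (3:ℕ) 4 = {3, 4} := by decide
  refine ⟨?_, ?_, ?_, ?_⟩
  · simp only [h14]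
    norm_num [Finset.sum_insert, Finset.mem_insert, min_def]
  · simp only [h14, h12]
    norm_num [Finset.sum_insert, Finset.mem_insert, Prod.ext_iff]
  · simp only [h14, h34]
    norm_num [Finset.sum_insert, Finset.mem_insert, Prod.ext_iff]
  · intro p q
    rw [le_div_iff₀ (by norm_num : (0:ℝ) < 16)]
    set grid : Finset (ℕ × ℕ) := Finset.Icc 1 4 ×ˢ Finset.Icc 1 4 with hgrid
    have hprod : ∑ i ∈ Finset.Icc (1:ℕ) 4, ∑ j ∈ Finset.Icc (1:ℕ) 4,
        min ((fun s a => (s.1 - a.1) ^ 2 + (s.2 - a.2) ^ 2) ((i : ℝ), (j : ℝ)) p)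
            ((fun s a => (s.1 - a.1) ^ 2 + (s.2 - a.2) ^ 2) ((i : ℝ), (j : ℝ)) q)
        = ∑ s ∈ grid, min (((s.1:ℝ) - p.1)^2 + ((s.2:ℝ) - p.2)^2)
            (((s.1:ℝ) - q.1)^2 + ((s.2:ℝ) - q.2)^2) := by
      rw [hgrid, Finset.sum_product]
    rw [hprod]
    set P : ℕ × ℕ → Prop := fun s =>
      ((s.1:ℝ) - p.1)^2 + ((s.2:ℝ) - p.2)^2 ≤ ((s.1:ℝ) - q.1)^2 + ((s.2:ℝ) - q.2)^2 with hP
    have hsplit : ∑ s ∈ grid, min (((s.1:ℝ) - p.1)^2 + ((s.2:ℝ) - p.2)^2)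
            (((s.1:ℝ) - q.1)^2 + ((s.2:ℝ) - q.2)^2)
        = ∑ s ∈ grid.filter P, (((s.1:ℝ) - p.1)^2 + ((s.2:ℝ) - p.2)^2)
          + ∑ s ∈ grid.filter (fun s => ¬ P s), (((s.1:ℝ) - q.1)^2 + ((s.2:ℝ) - q.2)^2) := by
      rw [← Finset.sum_filter_add_sum_filter_not grid P]
      congr 1
      · exact Finset.sum_congr rfl fun s hs => min_eq_left (Finset.mem_filter.mp hs).2
      · exact Finset.sum_congr rfl fun s hs =>
          min_eq_right (le_of_lt (not_le.mp (Finset.mem_filter.mp hs).2))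
    rw [hsplit]
    set A := grid.filter P with hA
    set B := grid.filter (fun s => ¬ P s) with hB
    -- numeric facts about the grid
    have hAsub : A ⊆ grid := Finset.filter_subset _ _
    have hBsub : B ⊆ grid := Finset.filter_subset _ _
    have hcard : A.card + B.card = 16 := by
      rw [hA, hB, Finset.card_filter_add_card_filter_not]; decide
    have hSx : (∑ s ∈ A, s.1) + (∑ s ∈ B, s.1) = 40 := by
      rw [hA, hB, Finset.sum_filter_add_sum_filter_not]; decide
    have hSy : (∑ s ∈ A, s.2) + (∑ s ∈ B, s.2) = 40 := by
      rw [hA, hB, Finset.sum_filter_add_sum_filter_not]; decide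
    have hQ : (∑ s ∈ A, (s.1^2 + s.2^2)) + (∑ s ∈ B, (s.1^2 + s.2^2)) = 240 := by
      rw [hA, hB, Finset.sum_filter_add_sum_filter_not]; decide
    have hbA := cluster_bound A p
    have hbB := cluster_bound B q
    have hleaf := grid_leaf A hAsub
    -- put everything in ℝ
    set n := A.card with hnEq
    set m := B.card with hmEq
    set sx := ∑ s ∈ A, s.1 with hsxEq
    set sy := ∑ s ∈ A, s.2 with hsyEq
    set qA := ∑ s ∈ A, (s.1^2 + s.2^2) with hqAEq
    have hn16 : n ≤ 16 := by omega
    have hmB : m = 16 - n := by omega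
    have hleafR : 2*((sx:ℝ)^2+(sy:ℝ)^2) + 400*(n:ℝ)
        ≤ 27*(n:ℝ)*(16-(n:ℝ)) + 10*(n:ℝ)*((sx:ℝ)+(sy:ℝ)) := by
      have := hleaf
      have h16 : (((16:ℕ) - n : ℕ) : ℝ) = 16 - (n:ℝ) := by
        push_cast [Nat.cast_sub hn16]; ring
      calc (2*((sx:ℝ)^2+(sy:ℝ)^2) + 400*(n:ℝ))
            = ((2*(sx^2+sy^2) + 400*n : ℕ) : ℝ) := by push_cast; ring
          _ ≤ ((27*n*(16-n) + 10*n*(sx+sy) : ℕ) : ℝ) := by exact_mod_cast this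
          _ = 27*(n:ℝ)*(16-(n:ℝ)) + 10*(n:ℝ)*((sx:ℝ)+(sy:ℝ)) := by
              push_cast [Nat.cast_sub hn16]; ring
    -- relations in ℝ for the B side
    have hmR : (m:ℝ) = 16 - (n:ℝ) := by
      have : (n:ℝ) + (m:ℝ) = 16 := by exact_mod_cast hcard
      linarith
    have hSxB : ((∑ s ∈ B, s.1 : ℕ) : ℝ) = 40 - (sx:ℝ) := by
      have : (sx:ℝ) + ((∑ s ∈ B, s.1 : ℕ) : ℝ) = 40 := by exact_mod_cast hSx
      linarith
    have hSyB : ((∑ s ∈ B, s.2 : ℕ) : ℝ) = 40 - (sy:ℝ) := by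
      have : (sy:ℝ) + ((∑ s ∈ B, s.2 : ℕ) : ℝ) = 40 := by exact_mod_cast hSy
      linarith
    have hQB : ((∑ s ∈ B, (s.1^2 + s.2^2) : ℕ) : ℝ) = 240 - (qA:ℝ) := by
      have : (qA:ℝ) + ((∑ s ∈ B, (s.1^2 + s.2^2) : ℕ) : ℝ) = 240 := by exact_mod_cast hQ
      linarith
    rw [hSxB, hSyB, hQB, hmR] at hbB
    -- remaining: combine the two cluster bounds with the combinatorial inequality
    have main : (24:ℝ) ≤
        ((qA:ℝ) - ((sx:ℝ)^2 + (sy:ℝ)^2) / (n:ℝ))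
        + ((240 - (qA:ℝ)) - ((40 - (sx:ℝ))^2 + (40 - (sy:ℝ))^2) / (16 - (n:ℝ))) := by
      rcases Nat.eq_zero_or_pos n with hn0 | hnpos
      · -- A is empty
        have hAe : A = ∅ := Finset.card_eq_zero.mp hn0
        have hsx0 : sx = 0 := by rw [hsxEq, hAe]; simp
        have hsy0 : sy = 0 := by rw [hsyEq, hAe]; simp
        have hqA0 : qA = 0 := by rw [hqAEq, hAe]; simp
        rw [hn0, hsx0, hsy0, hqA0]
        norm_num
      · rcases Nat.eq_zero_or_pos m with hm0 | hmpos
        · -- B is empty, A = grid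
          have hn16' : n = 16 := by omega
          have hAg : A = grid := Finset.eq_of_subset_of_card_le hAsub
            (by rw [show grid.card = 16 from by rw [hgrid]; decide]; omega)
          have hsx40 : sx = 40 := by rw [hsxEq, hAg, hgrid]; decide
          have hsy40 : sy = 40 := by rw [hsyEq, hAg, hgrid]; decide
          have hqA240 : qA = 240 := by rw [hqAEq, hAg, hgrid]; decide
          rw [hn16', hsx40, hsy40, hqA240]
          norm_num
        · have hnR : (0:ℝ) < (n:ℝ) := by exact_mod_cast hnpos
          have hmR' : (0:ℝ) < 16 - (n:ℝ) := by rw [← hmR]; exact_mod_cast hmpos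
          set u := ((sx:ℝ)^2 + (sy:ℝ)^2) / (n:ℝ) with hu
          set v := ((40 - (sx:ℝ))^2 + (40 - (sy:ℝ))^2) / (16 - (n:ℝ)) with hv
          have hun : u * (n:ℝ) = (sx:ℝ)^2 + (sy:ℝ)^2 := div_mul_cancel₀ _ (ne_of_gt hnR)
          have hvm : v * (16 - (n:ℝ)) = (40 - (sx:ℝ))^2 + (40 - (sy:ℝ))^2 :=
            div_mul_cancel₀ _ (ne_of_gt hmR')
          have hpos : (0:ℝ) < (n:ℝ) * (16 - (n:ℝ)) := mul_pos hnR hmR'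
          have h1 : ((sx:ℝ)^2+(sy:ℝ)^2)*(16-(n:ℝ)) + ((40-(sx:ℝ))^2+(40-(sy:ℝ))^2)*(n:ℝ)
              ≤ 216*((n:ℝ)*(16-(n:ℝ))) := by nlinarith [hleafR]
          have h2 : (u+v)*((n:ℝ)*(16-(n:ℝ)))
              = ((sx:ℝ)^2+(sy:ℝ)^2)*(16-(n:ℝ)) + ((40-(sx:ℝ))^2+(40-(sy:ℝ))^2)*(n:ℝ) := by
            calc (u+v)*((n:ℝ)*(16-(n:ℝ)))
                = (u*(n:ℝ))*(16-(n:ℝ)) + (v*(16-(n:ℝ)))*(n:ℝ) := by ring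
              _ = _ := by rw [hun, hvm]
          have h3 : u + v ≤ 216 := by
            rw [← mul_le_mul_iff_of_pos_right hpos, h2]; exact h1
          linarith
    calc (3:ℝ)/2 * 16 = 24 := by norm_num
      _ ≤ _ := le_trans main (by linarith [hbA, hbB])
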